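/- Every thin set of reals X ⊆ ℝ that is disjoint from the rationals is a σ-set: for every G_δ subset G of ℝ there is an F_σ set F with X ∩ G = X ∩ F. -/

import Mathlib

/-- An OIT (ordered interval tree): a sequence `(G_n)` of families of pairwise
disjoint open intervals such that every interval of `G_{n+1}` is contained in
some interval of `G_n`. -/
def IsOIT (G : ℕ → Set (Set ℝ)) : Prop :=
  (∀ n, ∀ I ∈ G n, ∃ a b : ℝ, I = Set.Ioo a b) ∧
  (∀ n, (G n).PairwiseDisjoint id) ∧
  (∀ n, ∀ I ∈ G (n + 1), ∃ J ∈ G n, I ⊆ J)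

/-- `Y` is `(G_n)`-small: there are finite `F_n ⊆ G_n` such that for every
`x ∈ Y` and every `n`, if `x ∈ ⋃ G_n` then `x ∈ ⋃ F_n`. -/
def IsOITSmall (G : ℕ → Set (Set ℝ)) (Y : Set ℝ) : Prop :=
  ∃ F : ℕ → Set (Set ℝ), (∀ n, F n ⊆ G n ∧ (F n).Finite) ∧
    ∀ x ∈ Y, ∀ n, x ∈ ⋃₀ G n → x ∈ ⋃₀ F n

/-- `X` is thin: for every OIT `(G_n)`, `X` is a countable union of `(G_n)`-small sets. -/
def IsThin (X : Set ℝ) : Prop :=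
  ∀ G : ℕ → Set (Set ℝ), IsOIT G →
    ∃ Y : ℕ → Set ℝ, X = (⋃ n, Y n) ∧ ∀ n, IsOITSmall G (Y n)

/-! ### Auxiliary machinery: maximal dyadic cells

Given a Gδ set `G = ⋂ V_m` (with `V_m` open and decreasing), we use the OIT
whose `m`-th level consists of all *maximal* dyadic intervals whose closure is
contained in `V_m`.  These families are pairwise disjoint and refine each
other, and every irrational point of `V_m` is covered.  If `X` is thin, each
piece `Y_k` meets only the finitely many cells `F_{k,m}` at level `m`, and the
set `C_k := ⋂_m ⋃ {closure w : w ∈ F_{k,m}}` is a closed subset of `G`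
containing `Y_k ∩ G` (off the rationals).  This yields the σ-set property. -/

noncomputable section
namespace Stmt18Aux
open Set

/-- Left endpoint of the dyadic cell of depth `n` and index `k`. -/
def pt (n : ℕ) (k : ℤ) : ℝ := (k : ℝ) / 2 ^ n

/-- The open dyadic cell of depth `n`, index `k`. -/
def cell (n : ℕ) (k : ℤ) : Set ℝ := Set.Ioo (pt n k) (pt n (k + 1))

/-- The closed dyadic cell. -/
def ccell (n : ℕ) (k : ℤ) : Set ℝ := Set.Icc (pt n k) (pt n (k + 1))

lemma two_pow_pos (n : ℕ) : (0:ℝ) < 2 ^ n := by positivity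

lemma pt_lt (n : ℕ) (k : ℤ) : pt n k < pt n (k + 1) := by
  unfold pt
  rw [div_lt_div_iff_of_pos_right (two_pow_pos n)]
  push_cast; linarith

lemma closure_cell (n : ℕ) (k : ℤ) : closure (cell n k) = ccell n k :=
  closure_Ioo (pt_lt n k).ne

/-- The parent's left endpoint lies to the left. -/
lemma pt_parent_le (n : ℕ) (k : ℤ) : pt n (k.ediv 2) ≤ pt (n + 1) k := by
  unfold pt
  have hk : 2 * (k.ediv 2) + k.emod 2 = k := Int.mul_ediv_add_emod k 2
  have hr0 : 0 ≤ k.emod 2 := Int.emod_nonneg k (by norm_num)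
  have h2 : ((k.ediv 2 : ℤ) : ℝ) / 2 ^ n = (2 * (k.ediv 2) : ℤ) / 2 ^ (n + 1) := by
    push_cast; rw [pow_succ]; field_simp
  rw [h2, div_le_div_iff_of_pos_right (two_pow_pos (n + 1))]
  have : ((2 * k.ediv 2 : ℤ) : ℝ) ≤ ((2 * k.ediv 2 + k.emod 2 : ℤ) : ℝ) := by
    push_cast; linarith [ (Int.cast_nonneg hr0 : (0:ℝ) ≤ (k.emod 2 : ℝ)) ]
  calc ((2 * k.ediv 2 : ℤ) : ℝ) ≤ ((2 * k.ediv 2 + k.emod 2 : ℤ) : ℝ) := this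
    _ = (k : ℝ) := by rw [hk]

/-- The parent's right endpoint lies to the right. -/
lemma pt_parent_ge (n : ℕ) (k : ℤ) : pt (n + 1) (k + 1) ≤ pt n (k.ediv 2 + 1) := by
  unfold pt
  have hk : 2 * (k.ediv 2) + k.emod 2 = k := Int.mul_ediv_add_emod k 2
  have hr1 : k.emod 2 < 2 := Int.emod_lt_of_pos k (by norm_num)
  have h2 : ((k.ediv 2 + 1 : ℤ) : ℝ) / 2 ^ n = ((2 * (k.ediv 2) + 2 : ℤ) : ℝ) / 2 ^ (n + 1) := by
    push_cast; rw [pow_succ]; field_simp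
  rw [h2, div_le_div_iff_of_pos_right (two_pow_pos (n + 1))]
  have : (k : ℝ) + 1 ≤ ((2 * k.ediv 2 + 2 : ℤ) : ℝ) := by
    have : k + 1 ≤ 2 * k.ediv 2 + 2 := by omega
    exact_mod_cast this
  exact_mod_cast this

lemma ccell_subset_parent (n : ℕ) (k : ℤ) : ccell (n + 1) k ⊆ ccell n (k.ediv 2) :=
  Set.Icc_subset_Icc (pt_parent_le n k) (pt_parent_ge n k)

lemma cell_subset_parent (n : ℕ) (k : ℤ) : cell (n + 1) k ⊆ cell n (k.ediv 2) :=
  Set.Ioo_subset_Ioo (pt_parent_le n k) (pt_parent_ge n k)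

/-- At a fixed depth, the cell containing a point is unique. -/
lemma index_unique {x : ℝ} {n : ℕ} {k k' : ℤ} (h : x ∈ cell n k) (h' : x ∈ cell n k') :
    k = k' := by
  obtain ⟨h1, h2⟩ := h
  obtain ⟨h1', h2'⟩ := h'
  unfold pt at h1 h2 h1' h2'
  rw [div_lt_iff₀ (two_pow_pos n)] at h1 h1'
  rw [lt_div_iff₀ (two_pow_pos n)] at h2 h2'
  have a1 : (k : ℝ) < (k' : ℝ) + 1 := by push_cast at h2' ⊢; linarith
  have a2 : (k' : ℝ) < (k : ℝ) + 1 := by push_cast at h2 ⊢; linarith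
  have b1 : k < k' + 1 := by exact_mod_cast a1
  have b2 : k' < k + 1 := by exact_mod_cast a2
  omega

/-- If `x` lies in a cell at depth `n` and also in one at depth `n + d`, the
deeper closed cell is contained in the shallower one. -/
lemma ccell_chain {x : ℝ} {n : ℕ} {k : ℤ} (hx : x ∈ cell n k) :
    ∀ d (k' : ℤ), x ∈ cell (n + d) k' → ccell (n + d) k' ⊆ ccell n k := by
  intro d
  induction d with
  | zero =>
      intro k' hx'
      rw [Nat.add_zero] at hx' ⊢
      rw [index_unique hx' hx]
  | succ d ih =>
      intro k' hx'
      have hpar : x ∈ cell (n + d) (k'.ediv 2) := cell_subset_parent _ _ hx'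
      exact (ccell_subset_parent (n + d) k').trans (ih _ hpar)

/-- The cell qualifies for `W`: its closure is contained in `W`. -/
def qual (W : Set ℝ) (n : ℕ) (k : ℤ) : Prop := ccell n k ⊆ W

/-- Family of maximal dyadic cells whose closure is contained in `W`. -/
def fam (W : Set ℝ) : Set (Set ℝ) :=
  {c | ∃ n k, qual W n k ∧ (∀ m, n = m + 1 → ¬ qual W m (k.ediv 2)) ∧ c = cell n k}

variable {W : Set ℝ}

/-- Every qualifying cell is contained in some member of the family. -/
lemma exists_max (W : Set ℝ) : ∀ n k, qual W n k → ∃ J ∈ fam W, cell n k ⊆ J := by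
  intro n
  induction n with
  | zero =>
      intro k hq
      exact ⟨cell 0 k, ⟨0, k, hq, fun m hm => by omega, rfl⟩, subset_rfl⟩
  | succ n ih =>
      intro k hq
      by_cases hq2 : qual W n (k.ediv 2)
      · obtain ⟨J, hJ, hsub⟩ := ih (k.ediv 2) hq2
        exact ⟨J, hJ, (cell_subset_parent n k).trans hsub⟩
      · refine ⟨cell (n + 1) k, ⟨n + 1, k, hq, ?_, rfl⟩, subset_rfl⟩
        intro m hm
        have : m = n := by omega
        rwa [this]

/-- Two members of the family sharing a point are equal (helper, `n ≤ n'`). -/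
lemma eq_of_mem_aux {n n' : ℕ} {k k' : ℤ} (hle : n ≤ n')
    (h1 : qual W n k)
    (h2' : ∀ m, n' = m + 1 → ¬ qual W m (k'.ediv 2))
    {x : ℝ} (hx : x ∈ cell n k) (hx' : x ∈ cell n' k') :
    cell n k = cell n' k' := by
  rcases Nat.eq_or_lt_of_le hle with heq | hlt
  · subst heq
    rw [index_unique hx hx']
  · obtain ⟨d, rfl⟩ : ∃ d, n' = n + d + 1 := ⟨n' - n - 1, by omega⟩
    exfalso
    have hpar : x ∈ cell (n + d) (k'.ediv 2) := cell_subset_parent _ _ hx'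
    have hsub : ccell (n + d) (k'.ediv 2) ⊆ ccell n k := ccell_chain hx d _ hpar
    exact h2' (n + d) rfl (hsub.trans h1)

/-- Two members of the family sharing a point are equal. -/
lemma eq_of_mem {c c' : Set ℝ} (hc : c ∈ fam W) (hc' : c' ∈ fam W)
    {x : ℝ} (hx : x ∈ c) (hx' : x ∈ c') : c = c' := by
  obtain ⟨n, k, hq, hmax, rfl⟩ := hc
  obtain ⟨n', k', hq', hmax', rfl⟩ := hc'
  rcases le_total n n' with h | h
  · exact eq_of_mem_aux h hq hmax' hx hx'
  · exact (eq_of_mem_aux h hq' hmax hx' hx).symm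

lemma fam_pairwiseDisjoint (W : Set ℝ) : (fam W).PairwiseDisjoint id := by
  intro c hc c' hc' hne
  rw [Function.onFun, Set.disjoint_left]
  intro x hx hx'
  exact hne (eq_of_mem hc hc' hx hx')

/-- Coverage: every irrational point of the open set `W` lies in `⋃₀ fam W`. -/
lemma mem_sUnion_fam {x : ℝ} (hW : IsOpen W) (hx : x ∈ W) (hirr : Irrational x) :
    x ∈ ⋃₀ fam W := by
  obtain ⟨ε, hε, hball⟩ := Metric.isOpen_iff.mp hW x hx
  obtain ⟨n, hn⟩ := exists_pow_lt_of_lt_one hε (by norm_num : (1/2 : ℝ) < 1)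
  have hwidth : (1:ℝ) / 2 ^ n < ε := by
    calc (1:ℝ) / 2 ^ n = (1/2 : ℝ) ^ n := by rw [div_pow, one_pow]
    _ < ε := hn
  set k : ℤ := ⌊x * 2 ^ n⌋ with hk
  have hne : (k : ℝ) ≠ x * 2 ^ n := by
    intro h
    apply hirr.ne_rat ((k : ℚ) / 2 ^ n)
    push_cast
    rw [eq_div_iff (two_pow_pos n).ne']
    exact h.symm
  have h1 : (k : ℝ) < x * 2 ^ n := lt_of_le_of_ne (Int.floor_le _) hne
  have h2 : x * 2 ^ n < (k : ℝ) + 1 := Int.lt_floor_add_one _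
  have hxc : x ∈ cell n k := by
    constructor
    · rw [pt, div_lt_iff₀ (two_pow_pos n)]; linarith
    · rw [pt, lt_div_iff₀ (two_pow_pos n)]; push_cast; linarith
  have hq : qual W n k := by
    intro y hy
    apply hball
    rw [Metric.mem_ball, Real.dist_eq, abs_sub_lt_iff]
    obtain ⟨hy1, hy2⟩ := hy
    obtain ⟨hx1, hx2⟩ := hxc
    have hwid : pt n (k + 1) - pt n k = 1 / 2 ^ n := by
      rw [pt, pt, div_sub_div_same]
      push_cast; ring_nf
    constructor <;> nlinarith [hwid]
  obtain ⟨J, hJ, hsub⟩ := exists_max W n k hq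
  exact ⟨J, hJ, hsub hxc⟩

/-- Monotonicity: members over a smaller open set fit inside members over a bigger one. -/
lemma fam_mono {W W' : Set ℝ} (h : W ⊆ W') {c : Set ℝ} (hc : c ∈ fam W) :
    ∃ J ∈ fam W', c ⊆ J := by
  obtain ⟨n, k, hq, _, rfl⟩ := hc
  exact exists_max W' n k (hq.trans h)

end Stmt18Aux
end

open Stmt18Aux Set in
theorem stmt18 (X : Set ℝ) (hthin : IsThin X)
    (hirr : ∀ q : ℚ, (q : ℝ) ∉ X) :
    ∀ G : Set ℝ, IsGδ G →
      ∃ C : ℕ → Set ℝ, (∀ n, IsClosed (C n)) ∧ X ∩ G = X ∩ ⋃ n, C n := by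
  intro G hG
  obtain ⟨T, hTopen, hTc, rfl⟩ := hG
  -- an ℕ-indexed sequence of opens with the same intersection
  obtain ⟨U, hUopen, hUeq⟩ :
      ∃ U : ℕ → Set ℝ, (∀ i, IsOpen (U i)) ∧ ⋂₀ T = ⋂ i, U i := by
    rcases T.eq_empty_or_nonempty with rfl | hne
    · exact ⟨fun _ => univ, fun _ => isOpen_univ, by simp⟩
    · obtain ⟨f, rfl⟩ := hTc.exists_eq_range hne
      exact ⟨f, fun i => hTopen _ ⟨i, rfl⟩, Set.sInter_range f⟩
  -- decreasing sequence of opens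
  set V : ℕ → Set ℝ := fun m => ⋂ i ∈ Finset.range (m + 1), U i with hV
  have hVopen : ∀ m, IsOpen (V m) := fun m =>
    isOpen_biInter_finset (fun i _ => hUopen i)
  have hVanti : ∀ m, V (m + 1) ⊆ V m := by
    intro m x hx
    simp only [hV, Set.mem_iInter] at hx ⊢
    intro i hi
    exact hx i (Finset.mem_range.mpr (by have := Finset.mem_range.mp hi; omega))
  have hGsubV : ∀ m, (⋂₀ T) ⊆ V m := by
    intro m x hx
    simp only [hV, Set.mem_iInter]
    intro i _
    rw [hUeq] at hx
    exact Set.mem_iInter.mp hx i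
  have hVsubU : ∀ i, V i ⊆ U i := by
    intro i x hx
    simp only [hV, Set.mem_iInter] at hx
    exact hx i (Finset.mem_range.mpr (by omega))
  -- the OIT of maximal dyadic cells whose closures sit inside the `V m`
  set OIT : ℕ → Set (Set ℝ) := fun m => fam (V m) with hOITdef
  have hOIT : IsOIT OIT := by
    refine ⟨?_, ?_, ?_⟩
    · rintro n I ⟨m, k, _, _, rfl⟩
      exact ⟨pt m k, pt m (k + 1), rfl⟩
    · intro n
      exact fam_pairwiseDisjoint (V n)
    · intro n I hI
      exact fam_mono (hVanti n) hI
  obtain ⟨Y, hXY, hsm⟩ := hthin OIT hOIT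
  choose F hF hFsm using hsm
  refine ⟨fun k => ⋂ m, ⋃ w ∈ F k m, closure w, ?_, ?_⟩
  · intro k
    refine isClosed_iInter fun m => ?_
    exact Set.Finite.isClosed_biUnion (hF k m).2 (fun w _ => isClosed_closure)
  · apply Set.Subset.antisymm
    · rintro x ⟨hxX, hxG⟩
      refine ⟨hxX, ?_⟩
      have hxY : x ∈ ⋃ n, Y n := hXY ▸ hxX
      obtain ⟨k, hk⟩ := Set.mem_iUnion.mp hxY
      refine Set.mem_iUnion.mpr ⟨k, Set.mem_iInter.mpr fun m => ?_⟩
      have hxirr : Irrational x := by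
        rintro ⟨q, rfl⟩
        exact hirr q hxX
      have hcov : x ∈ ⋃₀ OIT m :=
        mem_sUnion_fam (hVopen m) (hGsubV m hxG) hxirr
      obtain ⟨w, hw, hxw⟩ := hFsm k x hk m hcov
      exact Set.mem_biUnion hw (subset_closure hxw)
    · rintro x ⟨hxX, hxC⟩
      refine ⟨hxX, ?_⟩
      obtain ⟨k, hk⟩ := Set.mem_iUnion.mp hxC
      rw [hUeq]
      refine Set.mem_iInter.mpr fun i => ?_
      have hx : x ∈ ⋃ w ∈ F k i, closure w := Set.mem_iInter.mp hk i
      obtain ⟨w, hw, hxw⟩ := Set.mem_iUnion₂.mp hx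
      have hwmem : w ∈ fam (V i) := (hF k i).1 hw
      obtain ⟨n, j, hq, _, rfl⟩ := hwmem
      rw [closure_cell] at hxw
      exact hVsubU i (hq hxw)
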